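/- For a prime p, the ring R = (ℤ/p²ℤ)[X] is not a Rado ring: the 3×3 matrix with rows (1,1,−1), (0,p,0), (0,0,p) is partition regular over R but does not satisfy the generalised columns condition over R. -/

import Mathlib

open BigOperators

/-- A matrix `A` over `S` is partition regular over the `S`-module `M` for `r` colours if
every colouring of `M` with `r` colours admits a nonzero monochromatic solution of `A m = 0`. -/
def IsPR {S : Type*} [CommRing S] {k l : ℕ} (A : Matrix (Fin k) (Fin l) S)
    (M : Type*) [AddCommGroup M] [Module S M] (r : ℕ) : Prop :=
  ∀ χ : M → Fin r, ∃ m : Fin l → M, m ≠ 0 ∧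
    (∀ i, ∑ j, A i j • m j = 0) ∧ ∀ j j', χ (m j) = χ (m j')

/-- Partition regularity for every (positive) finite number of colours. -/
def IsPRAll {S : Type*} [CommRing S] {k l : ℕ} (A : Matrix (Fin k) (Fin l) S)
    (M : Type*) [AddCommGroup M] [Module S M] : Prop :=
  ∀ r : ℕ, 1 ≤ r → IsPR A M r

/-- The generalised columns condition of Bergelson--Deuber--Hindman--Lefmann. -/
def GenColumnsCondition {R : Type*} [CommRing R] {k l : ℕ}
    (A : Matrix (Fin k) (Fin l) R) : Prop :=
  ∃ (m : ℕ) (I : Fin (m + 1) → Finset (Fin l)) (d : Fin (m + 1) → R),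
    (∀ t, (I t).Nonempty) ∧
    (∀ t t', t ≠ t' → Disjoint (I t) (I t')) ∧
    (∀ j : Fin l, ∃ t, j ∈ I t) ∧
    (∀ t, d t ≠ 0) ∧
    (∀ i : Fin k, d 0 * ∑ j ∈ I 0, A i j = 0) ∧
    (∀ t : Fin (m + 1), 0 < t →
      (fun i : Fin k => d t * ∑ j ∈ I t, A i j) ∈
        Submodule.span R
          ((fun j (i : Fin k) => A i j) '' {j | ∃ t', t' < t ∧ j ∈ I t'})) ∧
    (0 < m → ∀ n : ℕ,
      (Set.range fun r : R =>
        d 0 * (∏ t ∈ Finset.univ.filter (fun t => t ≠ 0), d t) ^ n * r).Infinite)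

/-- A ring is a Rado ring if partition regularity over it is equivalent to the
generalised columns condition, for every matrix. -/
def IsRadoRing (R : Type*) [CommRing R] : Prop :=
  ∀ (k l : ℕ) (A : Matrix (Fin k) (Fin l) R), IsPRAll A R ↔ GenColumnsCondition A


lemma zmod_ann_mul (p : ℕ) [Fact p.Prime] {x y : ZMod (p ^ 2)}
    (hx : x * (p : ZMod (p ^ 2)) = 0) (hy : y * (p : ZMod (p ^ 2)) = 0) : x * y = 0 := by
  have hp := (Fact.out : p.Prime)
  haveI : NeZero (p ^ 2) := ⟨pow_ne_zero 2 hp.ne_zero⟩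
  have key : ∀ z : ZMod (p ^ 2), z * (p : ZMod (p ^ 2)) = 0 →
      ∃ w : ZMod (p ^ 2), z = (p : ZMod (p ^ 2)) * w := by
    intro z hz
    have h1 : ((z.val * p : ℕ) : ZMod (p ^ 2)) = 0 := by
      push_cast
      rw [ZMod.natCast_val, ZMod.cast_id]
      exact hz
    rw [ZMod.natCast_eq_zero_iff] at h1
    have h2 : p ∣ z.val :=
      (Nat.mul_dvd_mul_iff_right hp.pos).mp (by rwa [← pow_two] : p * p ∣ z.val * p)
    obtain ⟨a, ha⟩ := h2
    refine ⟨(a : ZMod (p ^ 2)), ?_⟩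
    have hz' : ((z.val : ℕ) : ZMod (p ^ 2)) = z := by rw [ZMod.natCast_val, ZMod.cast_id]
    rw [← hz', ha]; push_cast; ring
  obtain ⟨a, ha⟩ := key x hx
  obtain ⟨b, hb⟩ := key y hy
  have hpp : (p : ZMod (p ^ 2)) * (p : ZMod (p ^ 2)) = 0 := by
    have : ((p ^ 2 : ℕ) : ZMod (p ^ 2)) = 0 := ZMod.natCast_self _
    push_cast at this
    linear_combination this
  rw [ha, hb]
  linear_combination (a * b) * hpp

lemma poly_ann_mul (p : ℕ) [Fact p.Prime] {a b : Polynomial (ZMod (p ^ 2))}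
    (ha : a * (p : Polynomial (ZMod (p ^ 2))) = 0) (hb : b * (p : Polynomial (ZMod (p ^ 2))) = 0) :
    a * b = 0 := by
  have hCp : (p : Polynomial (ZMod (p ^ 2))) = Polynomial.C (p : ZMod (p ^ 2)) :=
    (Polynomial.C_eq_natCast p).symm
  have hc : ∀ {c : Polynomial (ZMod (p ^ 2))}, c * (p : Polynomial (ZMod (p ^ 2))) = 0 →
      ∀ n, c.coeff n * (p : ZMod (p ^ 2)) = 0 := by
    intro c hcp n
    rw [hCp] at hcp
    have := congrArg (fun q => Polynomial.coeff q n) hcp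
    simpa [Polynomial.coeff_mul_C] using this
  ext n
  rw [Polynomial.coeff_mul, Polynomial.coeff_zero]
  exact Finset.sum_eq_zero fun x _ => zmod_ann_mul p (hc ha x.1) (hc hb x.2)

lemma FS_exists_finset {M : Type*} [AddCommMonoid M] {a : Stream' M} {m : M}
    (hm : m ∈ Hindman.FS a) : ∃ F : Finset ℕ, F.Nonempty ∧ m = ∑ i ∈ F, a.get i := by
  induction hm with
  | head' a => exact ⟨{0}, ⟨0, by simp⟩, by rw [Finset.sum_singleton]⟩
  | tail' a m h ih =>
    obtain ⟨F, hF, hsum⟩ := ih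
    refine ⟨F.map ⟨Nat.succ, Nat.succ_injective⟩, hF.map, ?_⟩
    rw [Finset.sum_map, hsum]
    rfl
  | cons' a m h ih =>
    obtain ⟨F, hF, hsum⟩ := ih
    refine ⟨insert 0 (F.map ⟨Nat.succ, Nat.succ_injective⟩), ⟨0, Finset.mem_insert_self _ _⟩, ?_⟩
    rw [Finset.sum_insert (by simp), Finset.sum_map, hsum]
    rfl

lemma hPR (p : ℕ) [Fact p.Prime] :
    IsPRAll
        (!![(1 : Polynomial (ZMod (p ^ 2))), 1, -1; 0, (p : Polynomial (ZMod (p ^ 2))), 0;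
            0, 0, (p : Polynomial (ZMod (p ^ 2)))])
        (Polynomial (ZMod (p ^ 2))) := by
  classical
  intro r _ χ
  have hp := (Fact.out : p.Prime)
  have hpp : (p : Polynomial (ZMod (p ^ 2))) * (p : Polynomial (ZMod (p ^ 2))) = 0 := by
    have h2 : ((p ^ 2 : ℕ) : Polynomial (ZMod (p ^ 2))) = 0 := by
      rw [← Polynomial.C_eq_natCast, (by exact_mod_cast ZMod.natCast_self (p ^ 2) :
        ((p ^ 2 : ℕ) : ZMod (p ^ 2)) = 0), Polynomial.C_0]
    push_cast at h2
    linear_combination h2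
  set a : Stream' (Polynomial (ZMod (p ^ 2))) := (fun n => (p : Polynomial (ZMod (p ^ 2))) * Polynomial.X ^ n) with ha
  -- every element of FS a is killed by p and nonzero
  have hkey : ∀ m ∈ Hindman.FS a, (p : Polynomial (ZMod (p ^ 2))) * m = 0 ∧ m ≠ 0 := by
    intro m hm
    obtain ⟨F, hF, hsum⟩ := FS_exists_finset hm
    have hget : ∀ i, a.get i = (p : Polynomial (ZMod (p ^ 2))) * Polynomial.X ^ i := fun i => rfl
    constructor
    · rw [hsum, Finset.mul_sum]
      refine Finset.sum_eq_zero fun i _ => ?_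
      rw [hget, ← mul_assoc, hpp, zero_mul]
    · intro h0
      obtain ⟨i0, hi0⟩ := hF
      have hco : m.coeff i0 = (p : ZMod (p ^ 2)) := by
        rw [hsum, Polynomial.finset_sum_coeff]
        rw [Finset.sum_congr rfl (fun i _ => ?_), Finset.sum_ite_eq' F i0 (fun _ => (p : ZMod (p^2))), if_pos hi0]
        rw [hget, ← Polynomial.C_eq_natCast, Polynomial.coeff_C_mul, Polynomial.coeff_X_pow]
        simp [eq_comm]
      rw [h0, Polynomial.coeff_zero] at hco
      have : ((p : ℕ) : ZMod (p ^ 2)) ≠ 0 := by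
        rw [Ne, ZMod.natCast_eq_zero_iff]
        intro hdvd
        have := Nat.le_of_dvd hp.pos hdvd
        nlinarith [hp.two_le]
      exact this hco.symm
  obtain ⟨c, hcmem, b, hb⟩ := Hindman.FS_partition_regular a
      (Set.range fun i : Fin r => χ ⁻¹' {i} ∩ Hindman.FS a) (Set.finite_range _)
      (fun m hm => Set.mem_sUnion.mpr ⟨_, ⟨χ m, rfl⟩, rfl, hm⟩)
  obtain ⟨i, rfl⟩ := hcmem
  set x := b.get 0
  set y := b.get 1
  have hx := hb (Hindman.FS.singleton b 0)
  have hy := hb (Hindman.FS.singleton b 1)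
  have hxy := hb (Hindman.FS.add_two b 0 1 (by norm_num))
  refine ⟨![y, x, x + y], ?_, ?_, ?_⟩
  · intro h0
    exact (hkey x hx.2).2 (congrFun h0 1)
  · intro j
    fin_cases j <;>
      simp [Fin.sum_univ_three, smul_eq_mul, (hkey x hx.2).1, (hkey y hy.2).1,
        (hkey (x + y) hxy.2).1] <;> ring_nf <;>
      simp [(hkey x hx.2).1, (hkey y hy.2).1, (hkey (x + y) hxy.2).1]
  · intro j j'
    have hcol : ∀ j, χ (![y, x, x + y] j) = i := by
      intro j
      fin_cases j
      · exact hy.1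
      · exact hx.1
      · exact hxy.1
    rw [hcol, hcol]

lemma hGCC (p : ℕ) [Fact p.Prime] :
      ¬ GenColumnsCondition
        (!![(1 : Polynomial (ZMod (p ^ 2))), 1, -1; 0, (p : Polynomial (ZMod (p ^ 2))), 0;
            0, 0, (p : Polynomial (ZMod (p ^ 2)))]) := by
  classical
  rintro ⟨m, I, d, hne, hdisj, hcov, hdnz, h0, hspan, hinf⟩
  set A : Matrix (Fin 3) (Fin 3) (Polynomial (ZMod (p ^ 2))) :=
    !![(1 : Polynomial (ZMod (p ^ 2))), 1, -1; 0, (p : Polynomial (ZMod (p ^ 2))), 0;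
            0, 0, (p : Polynomial (ZMod (p ^ 2)))] with hA
  have hmain : ∀ (jstar : Fin 3)
      (φ : (Fin 3 → Polynomial (ZMod (p ^ 2))) →ₗ[Polynomial (ZMod (p ^ 2))]
        Polynomial (ZMod (p ^ 2))),
      jstar ∉ I 0 → (∀ j, j ∉ I 0 → j = jstar) →
      (∀ j ∈ I 0, φ (fun i => A i j) = 0) →
      φ (fun i => A i jstar) = (p : Polynomial (ZMod (p ^ 2))) →
      d 0 * (p : Polynomial (ZMod (p ^ 2))) = 0 → False := by
    intro jstar φ hjstar hcomp hker0 hφstar hd0p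
    have hsingle : ∀ t, t ≠ 0 → I t = {jstar} := by
      intro t ht
      rw [Finset.eq_singleton_iff_nonempty_unique_mem]
      exact ⟨hne t, fun j hj => hcomp j (Finset.disjoint_left.mp (hdisj t 0 ht) hj)⟩
    have hm1 : 0 < m := by
      rcases Nat.eq_zero_or_pos m with hm0 | h
      · obtain ⟨t, htj⟩ := hcov jstar
        subst hm0
        have ht0 : t = 0 := Fin.ext (by omega)
        rw [ht0] at htj
        exact absurd htj hjstar
      · exact h
    have hm2 : m < 2 := by
      by_contra hge
      push_neg at hge
      have h1 : (⟨1, by omega⟩ : Fin (m + 1)) ≠ 0 := by simp [Fin.ext_iff]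
      have h2 : (⟨2, by omega⟩ : Fin (m + 1)) ≠ 0 := by simp [Fin.ext_iff]
      have h12 : (⟨1, by omega⟩ : Fin (m + 1)) ≠ ⟨2, by omega⟩ := by simp [Fin.ext_iff]
      have hd := hdisj _ _ h12
      rw [hsingle _ h1, hsingle _ h2] at hd
      simp at hd
    have hm : m = 1 := by omega
    subst hm
    have hI1 : I 1 = {jstar} := hsingle 1 (by decide)
    have hsp := hspan 1 (by decide)
    have himg : ((fun j (i : Fin 3) => A i j) '' {j | ∃ t', t' < (1 : Fin 2) ∧ j ∈ I t'}) ⊆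
        (LinearMap.ker φ : Set _) := by
      rintro _ ⟨j, ⟨t', ht', hj⟩, rfl⟩
      have ht'0 : t' = 0 := by
        have : t'.val < 1 := ht'
        exact Fin.ext (by omega)
      exact hker0 j (ht'0 ▸ hj)
    have hv : φ (fun i => d 1 * ∑ j ∈ I 1, A i j) = 0 :=
      LinearMap.mem_ker.mp (Submodule.span_le.mpr himg hsp)
    have hrw : (fun i => d 1 * ∑ j ∈ I 1, A i j) = d 1 • (fun i => A i jstar) := by
      funext i
      rw [hI1, Finset.sum_singleton]
      rfl
    rw [hrw, map_smul, smul_eq_mul, hφstar] at hv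
    have h01 : d 0 * d 1 = 0 := poly_ann_mul p hd0p hv
    have hprod : (∏ t ∈ Finset.univ.filter (fun t : Fin 2 => t ≠ 0), d t) = d 1 := by
      rw [show (Finset.univ.filter fun t : Fin 2 => t ≠ 0) = {1} by decide,
        Finset.prod_singleton]
    refine hinf (by norm_num) 1 (Set.Finite.subset (Set.finite_singleton 0) ?_)
    rintro _ ⟨r, rfl⟩
    simp only [Set.mem_singleton_iff, hprod, pow_one, h01, zero_mul]
  by_cases h0m : (0 : Fin 3) ∈ I 0 <;> by_cases h1m : (1 : Fin 3) ∈ I 0 <;>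
    by_cases h2m : (2 : Fin 3) ∈ I 0
  -- (T,T,T)
  · have hI0 : I 0 = {0, 1, 2} := by
      ext j; fin_cases j <;> simp [h0m, h1m, h2m]
    have hs := h0 0
    rw [hI0] at hs
    simp [hA, Finset.sum_insert, Finset.mem_insert, Finset.mem_singleton] at hs
    exact hdnz 0 hs
  -- (T,T,F)
  · have hI0 : I 0 = {0, 1} := by
      ext j; fin_cases j <;> simp [h0m, h1m, h2m]
    refine hmain 2 (LinearMap.proj 2) h2m ?_ ?_ ?_ ?_
    · intro j hj; fin_cases j
      · exact absurd h0m hj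
      · exact absurd h1m hj
      · rfl
    · intro j hj
      rw [hI0] at hj
      rcases Finset.mem_insert.mp hj with rfl | hj
      · simp [hA, Matrix.vecHead, Matrix.vecTail]
      · rw [Finset.mem_singleton.mp hj]; simp [hA, Matrix.vecHead, Matrix.vecTail]
    · simp [hA, Matrix.vecHead, Matrix.vecTail]
    · have hs := h0 1
      rw [hI0] at hs
      simpa [hA, Finset.sum_insert, Finset.mem_singleton] using hs
  -- (T,F,T)
  · have hI0 : I 0 = {0, 2} := by
      ext j; fin_cases j <;> simp [h0m, h1m, h2m]
    refine hmain 1 (LinearMap.proj 1) h1m ?_ ?_ ?_ ?_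
    · intro j hj; fin_cases j
      · exact absurd h0m hj
      · rfl
      · exact absurd h2m hj
    · intro j hj
      rw [hI0] at hj
      rcases Finset.mem_insert.mp hj with rfl | hj
      · simp [hA, Matrix.vecHead, Matrix.vecTail]
      · rw [Finset.mem_singleton.mp hj]; simp [hA, Matrix.vecHead, Matrix.vecTail]
    · simp [hA, Matrix.vecHead, Matrix.vecTail]
    · have hs := h0 2
      rw [hI0] at hs
      simpa [hA, Finset.sum_insert, Finset.mem_singleton] using hs
  -- (T,F,F)
  · have hI0 : I 0 = {0} := by
      ext j; fin_cases j <;> simp [h0m, h1m, h2m]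
    have hs := h0 0
    rw [hI0] at hs
    simp [hA, Matrix.vecHead, Matrix.vecTail] at hs
    exact hdnz 0 hs
  -- (F,T,T)
  · have hI0 : I 0 = {1, 2} := by
      ext j; fin_cases j <;> simp [h0m, h1m, h2m]
    refine hmain 0
      ((p : Polynomial (ZMod (p ^ 2))) • LinearMap.proj 0 - LinearMap.proj 1 + LinearMap.proj 2)
      h0m ?_ ?_ ?_ ?_
    · intro j hj; fin_cases j
      · rfl
      · exact absurd h1m hj
      · exact absurd h2m hj
    · intro j hj
      rw [hI0] at hj
      rcases Finset.mem_insert.mp hj with rfl | hj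
      · simp [hA, Matrix.vecHead, Matrix.vecTail]
      · rw [Finset.mem_singleton.mp hj]; simp [hA, Matrix.vecHead, Matrix.vecTail]
    · simp [hA, Matrix.vecHead, Matrix.vecTail]
    · have hs := h0 1
      rw [hI0] at hs
      simpa [hA, Finset.sum_insert, Finset.mem_singleton] using hs
  -- (F,T,F)
  · have hI0 : I 0 = {1} := by
      ext j; fin_cases j <;> simp [h0m, h1m, h2m]
    have hs := h0 0
    rw [hI0] at hs
    simp [hA, Matrix.vecHead, Matrix.vecTail] at hs
    exact hdnz 0 hs
  -- (F,F,T)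
  · have hI0 : I 0 = {2} := by
      ext j; fin_cases j <;> simp [h0m, h1m, h2m]
    have hs := h0 0
    rw [hI0] at hs
    simp [hA, Matrix.vecHead, Matrix.vecTail] at hs
    exact hdnz 0 hs
  -- (F,F,F)
  · obtain ⟨j, hj⟩ := hne 0
    fin_cases j
    · exact h0m hj
    · exact h1m hj
    · exact h2m hj

theorem zmodPSq_poly_not_radoRing (p : ℕ) [Fact p.Prime] :
    ¬ IsRadoRing (Polynomial (ZMod (p ^ 2))) ∧
      IsPRAll
        (!![(1 : Polynomial (ZMod (p ^ 2))), 1, -1; 0, (p : Polynomial (ZMod (p ^ 2))), 0;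
            0, 0, (p : Polynomial (ZMod (p ^ 2)))])
        (Polynomial (ZMod (p ^ 2))) ∧
      ¬ GenColumnsCondition
        (!![(1 : Polynomial (ZMod (p ^ 2))), 1, -1; 0, (p : Polynomial (ZMod (p ^ 2))), 0;
            0, 0, (p : Polynomial (ZMod (p ^ 2)))]) := by
  refine ⟨fun h => hGCC p ((h 3 3 _).mp (hPR p)), hPR p, hGCC p⟩
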